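/- Let $n \ge 2$, $j \ge 1$, $N \in \mathbb{N}$, and set $h = j^{-1}$. For fixed $\beta \ge 0$ there exist constants $c_1, c_2 > 0$ (independent of $j$) such that, writing $x = (x_1, x_2, \bar{x})$ with $\bar{x} \in \mathbb{R}^{n-1}$, $c_1 j^{-(n-1)/2} \le \int_{S^n} (1 - |\bar{x}|^2)^j (1 + j^{-1}|\bar{x}|^2)^{2\beta} \, d\mu(x) \le c_2 j^{-(n-1)/2}$. -/

import Mathlib

open MeasureTheory Metric Set Module
open scoped ENNReal NNReal

/-- `|x̄|²` for `x = (x₁, x₂, x̄) ∈ ℝ^{n+1}`. -/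
def barNormSq (n : ℕ) (x : EuclideanSpace ℝ (Fin (n + 1))) : ℝ :=
  ∑ m ∈ Finset.univ.filter (fun m : Fin (n + 1) => m ≠ 0 ∧ m ≠ 1), (x m) ^ 2

set_option maxHeartbeats 1000000

noncomputable section

private abbrev Fm (k : ℕ) := EuclideanSpace ℝ (Fin k)

lemma euclid_dist_sq {k : ℕ} (x y : Fm k) : dist x y ^ 2 = ∑ i, (x i - y i) ^ 2 := by
  rw [EuclideanSpace.dist_eq, Real.sq_sqrt (by positivity)]
  simp [Real.dist_eq, sq_abs]

lemma euclid_norm_sq {k : ℕ} (x : Fm k) : ‖x‖ ^ 2 = ∑ i, x i ^ 2 := by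
  have := euclid_dist_sq x 0
  simpa [dist_zero_right] using this

def gmap (m : ℕ) (s : ℝ) (y : Fm (m+2)) : Fm (m+3) :=
  WithLp.toLp 2 (Fin.cons (s * Real.sqrt (1 - ‖y‖ ^ 2)) (fun i => y i) : Fin (m+3) → ℝ)

lemma gmap_zero (m s y) : gmap m s y 0 = s * Real.sqrt (1 - ‖y‖ ^ 2) := rfl

lemma gmap_succ (m s y) (i : Fin (m+2)) : gmap m s y i.succ = y i := rfl

def pmap (m : ℕ) (x : Fm (m+3)) : Fm (m+2) := WithLp.toLp 2 (fun i => x i.succ)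

lemma pmap_gmap (m s y) : pmap m (gmap m s y) = y := rfl

lemma coord_abs_sub_le {k : ℕ} (x y : Fm k) (i : Fin k) : |x i - y i| ≤ dist x y := by
  have h1 : (x i - y i)^2 ≤ dist x y ^ 2 := by
    rw [euclid_dist_sq]
    exact Finset.single_le_sum (f := fun i => (x i - y i)^2) (fun j _ => by positivity)
      (Finset.mem_univ i)
  calc |x i - y i| = Real.sqrt ((x i - y i)^2) := (Real.sqrt_sq_eq_abs _).symm
    _ ≤ Real.sqrt (dist x y ^ 2) := Real.sqrt_le_sqrt h1
    _ = dist x y := by rw [Real.sqrt_sq dist_nonneg]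

def tailSq {k : ℕ} (y : Fm (k+1)) : ℝ := ∑ i : Fin k, y i.succ ^ 2

lemma tailSq_nonneg {k : ℕ} (y : Fm (k+1)) : 0 ≤ tailSq y := by
  unfold tailSq; positivity

lemma succ_succ_ne (m : ℕ) (i : Fin (m+1)) :
    (i.succ.succ : Fin (m+3)) ≠ 0 ∧ (i.succ.succ : Fin (m+3)) ≠ 1 := by
  refine ⟨Fin.succ_ne_zero _, fun h => ?_⟩
  have h1 : ((0:Fin (m+2)).succ : Fin (m+3)) = 1 := by simp [Fin.ext_iff]
  have : i.succ = 0 := Fin.succ_injective _ (by rw [h, ← h1])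
  exact Fin.succ_ne_zero _ this

lemma barNormSq_eq (m : ℕ) (x : Fm (m+3)) :
    barNormSq (m+2) x = ∑ i : Fin (m+1), x i.succ.succ ^ 2 := by
  unfold barNormSq
  have hset : Finset.univ.filter (fun q : Fin (m + 3) => q ≠ 0 ∧ q ≠ 1)
      = Finset.image (fun i : Fin (m+1) => i.succ.succ) Finset.univ := by
    ext q
    simp only [Finset.mem_filter, Finset.mem_univ, true_and, Finset.mem_image]
    constructor
    · rintro ⟨h0, h1⟩
      obtain ⟨a, rfl⟩ := Fin.eq_succ_of_ne_zero h0
      have ha : a ≠ 0 := by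
        rintro rfl
        exact h1 (by simp [Fin.ext_iff])
      obtain ⟨b, rfl⟩ := Fin.eq_succ_of_ne_zero ha
      exact ⟨b, rfl⟩
    · rintro ⟨i, rfl⟩
      exact succ_succ_ne m i
  rw [hset, Finset.sum_image (fun a _ b _ h => by
    exact Fin.succ_injective _ (Fin.succ_injective _ h))]

lemma barNormSq_tailSq (m : ℕ) (x : Fm (m+3)) :
    barNormSq (m+2) x = tailSq (WithLp.toLp 2 (fun i => x i.succ) : Fm (m+2)) := by
  rw [barNormSq_eq]; rfl

lemma barNormSq_nonneg (n : ℕ) (x : EuclideanSpace ℝ (Fin (n+1))) : 0 ≤ barNormSq n x := by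
  unfold barNormSq; positivity

lemma mem_sphere_sum {k : ℕ} (x : Fm k) (hx : x ∈ sphere (0 : Fm k) 1) :
    ∑ i, x i ^ 2 = 1 := by
  rw [mem_sphere_iff_norm, sub_zero] at hx
  rw [← euclid_norm_sq, hx, one_pow]

lemma barNormSq_le_one' (m : ℕ) (x : Fm (m+3)) (hx : x ∈ sphere (0 : Fm (m+3)) 1) :
    barNormSq (m+2) x ≤ 1 ∧ 1 - barNormSq (m+2) x = x 0 ^2 + x 1 ^2 := by
  have hs := mem_sphere_sum x hx
  rw [Fin.sum_univ_succ, Fin.sum_univ_succ] at hs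
  have h1 : ((0:Fin (m+2)).succ : Fin (m+3)) = 1 := by simp [Fin.ext_iff]
  rw [barNormSq_eq]
  constructor
  · nlinarith [sq_nonneg (x 0), sq_nonneg (x ((0:Fin (m+2)).succ))]
  · rw [← h1]; linarith

lemma gmap_dist_sq (m : ℕ) (s : ℝ) (y y' : Fm (m+2)) :
    dist (gmap m s y) (gmap m s y') ^ 2 =
      (s * Real.sqrt (1 - ‖y‖ ^ 2) - s * Real.sqrt (1 - ‖y'‖ ^ 2)) ^ 2 + dist y y' ^ 2 := by
  rw [euclid_dist_sq, Fin.sum_univ_succ, euclid_dist_sq (y := y')]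
  rfl

lemma dist_le_gmap_dist (m : ℕ) (s : ℝ) (y y' : Fm (m+2)) :
    dist y y' ≤ dist (gmap m s y) (gmap m s y') := by
  have h := gmap_dist_sq m s y y'
  nlinarith [dist_nonneg (x := y) (y := y'), dist_nonneg (x := gmap m s y) (y := gmap m s y'),
    sq_nonneg (s * Real.sqrt (1 - ‖y‖ ^ 2) - s * Real.sqrt (1 - ‖y'‖ ^ 2))]

lemma antilipschitz_gmap (m : ℕ) (s : ℝ) : AntilipschitzWith 1 (gmap m s) := by
  rw [antilipschitzWith_iff_le_mul_dist]
  intro x y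
  rw [NNReal.coe_one, one_mul]
  exact dist_le_gmap_dist m s x y

lemma sqrt_one_sub_diff {a b δ : ℝ} (hδ : 0 < δ) (ha : a ≤ 1 - δ^2) (hb : b ≤ 1 - δ^2) :
    |Real.sqrt (1 - a) - Real.sqrt (1 - b)| ≤ |a - b| / (2 * δ) := by
  set u := Real.sqrt (1 - a)
  set v := Real.sqrt (1 - b)
  have hδ2 : δ^2 ≤ 1 - a := by linarith
  have hδ2' : δ^2 ≤ 1 - b := by linarith
  have hu : δ ≤ u := by
    rw [show δ = Real.sqrt (δ^2) by rw [Real.sqrt_sq hδ.le]]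
    exact Real.sqrt_le_sqrt hδ2
  have hv : δ ≤ v := by
    rw [show δ = Real.sqrt (δ^2) by rw [Real.sqrt_sq hδ.le]]
    exact Real.sqrt_le_sqrt hδ2'
  have hu2 : u^2 = 1 - a := Real.sq_sqrt (by nlinarith)
  have hv2 : v^2 = 1 - b := Real.sq_sqrt (by nlinarith)
  have huv : 0 < u + v := by linarith
  rw [div_eq_inv_mul, ← abs_of_pos (show (0:ℝ) < (2*δ)⁻¹ by positivity), ← abs_mul]
  have key : |u - v| * (u + v) = |a - b| := by
    rw [← abs_of_pos huv, ← abs_mul]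
    have : (u - v) * (u + v) = b - a := by ring_nf; nlinarith [hu2, hv2]
    rw [this, abs_sub_comm]
  calc |u - v| = |u - v| * (u+v) / (u+v) := by field_simp
    _ = |a - b| / (u + v) := by rw [key]
    _ ≤ |a - b| / (2*δ) := by
        apply div_le_div_of_nonneg_left (abs_nonneg _) (by positivity) (by linarith)
    _ = |(2*δ)⁻¹ * (a-b)| := by
        rw [abs_mul, abs_of_pos (show (0:ℝ) < (2*δ)⁻¹ by positivity), div_eq_inv_mul]

lemma lipschitzOnWith_gmap (m : ℕ) (s δ : ℝ) (hs : |s| ≤ 1) (hδ : 0 < δ) (hδ1 : δ ≤ 1) :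
    LipschitzOnWith (Real.toNNReal (1 + δ⁻¹)) (gmap m s)
      (closedBall (0 : Fm (m+2)) (Real.sqrt (1 - δ^2))) := by
  rw [lipschitzOnWith_iff_dist_le_mul]
  intro y hy y' hy'
  have hcoe : ((Real.toNNReal (1 + δ⁻¹) : ℝ≥0) : ℝ) = 1 + δ⁻¹ :=
    Real.coe_toNNReal _ (by positivity)
  rw [hcoe]
  have hR : 0 ≤ Real.sqrt (1 - δ^2) := Real.sqrt_nonneg _
  have hR2 : Real.sqrt (1 - δ^2) ^ 2 = 1 - δ^2 := Real.sq_sqrt (by nlinarith)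
  have hyB : ‖y‖ ≤ Real.sqrt (1 - δ^2) := by simpa [mem_closedBall, dist_zero_right] using hy
  have hy'B : ‖y'‖ ≤ Real.sqrt (1 - δ^2) := by simpa [mem_closedBall, dist_zero_right] using hy'
  have ha : ‖y‖^2 ≤ 1 - δ^2 := by nlinarith [norm_nonneg y]
  have hb : ‖y'‖^2 ≤ 1 - δ^2 := by nlinarith [norm_nonneg y']
  have hdiff := sqrt_one_sub_diff hδ ha hb
  have habd : |‖y‖^2 - ‖y'‖^2| ≤ 2 * dist y y' := by
    have h1 : |‖y‖ - ‖y'‖| ≤ dist y y' := abs_norm_sub_norm_le y y'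
    have h2 : ‖y‖^2 - ‖y'‖^2 = (‖y‖ - ‖y'‖) * (‖y‖ + ‖y'‖) := by ring
    rw [h2, abs_mul]
    have h3 : |‖y‖ + ‖y'‖| ≤ 2 := by
      rw [abs_of_nonneg (by positivity)]
      nlinarith [Real.sqrt_le_sqrt (show 1 - δ^2 ≤ 1 by nlinarith), Real.sqrt_one]
    calc |‖y‖ - ‖y'‖| * |‖y‖ + ‖y'‖| ≤ dist y y' * 2 := by
          apply mul_le_mul h1 h3 (abs_nonneg _) dist_nonneg
      _ = 2 * dist y y' := by ring
  have hkey : |Real.sqrt (1 - ‖y‖^2) - Real.sqrt (1 - ‖y'‖^2)| ≤ δ⁻¹ * dist y y' := by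
    calc |Real.sqrt (1 - ‖y‖^2) - Real.sqrt (1 - ‖y'‖^2)| ≤ |‖y‖^2 - ‖y'‖^2| / (2*δ) := hdiff
      _ ≤ 2 * dist y y' / (2 * δ) := by
          apply div_le_div_of_nonneg_right habd (by positivity)
      _ = δ⁻¹ * dist y y' := by field_simp
  have hsq := gmap_dist_sq m s y y'
  have hs2 : (s * Real.sqrt (1 - ‖y‖ ^ 2) - s * Real.sqrt (1 - ‖y'‖ ^ 2))^2
      ≤ (δ⁻¹ * dist y y')^2 := by
    have : s * Real.sqrt (1 - ‖y‖ ^ 2) - s * Real.sqrt (1 - ‖y'‖ ^ 2)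
        = s * (Real.sqrt (1 - ‖y‖ ^ 2) - Real.sqrt (1 - ‖y'‖ ^ 2)) := by ring
    rw [this, mul_pow]
    have h4 : s^2 ≤ 1 := by nlinarith [abs_nonneg s, sq_abs s]
    have h5 : (Real.sqrt (1 - ‖y‖ ^ 2) - Real.sqrt (1 - ‖y'‖ ^ 2))^2 ≤ (δ⁻¹ * dist y y')^2 := by
      rw [← sq_abs (Real.sqrt (1 - ‖y‖ ^ 2) - Real.sqrt (1 - ‖y'‖ ^ 2))]
      apply pow_le_pow_left₀ (abs_nonneg _) hkey
    nlinarith [sq_nonneg (Real.sqrt (1 - ‖y‖ ^ 2) - Real.sqrt (1 - ‖y'‖ ^ 2)), sq_nonneg (δ⁻¹ * dist y y')]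
  have hfin : dist (gmap m s y) (gmap m s y') ^ 2 ≤ ((1 + δ⁻¹) * dist y y')^2 := by
    rw [hsq]
    have hd : 0 ≤ dist y y' := dist_nonneg
    have hdi : 0 < δ⁻¹ := by positivity
    nlinarith [hs2]
  calc dist (gmap m s y) (gmap m s y')
      = Real.sqrt (dist (gmap m s y) (gmap m s y') ^ 2) := by rw [Real.sqrt_sq dist_nonneg]
    _ ≤ Real.sqrt (((1 + δ⁻¹) * dist y y')^2) := Real.sqrt_le_sqrt hfin
    _ = (1 + δ⁻¹) * dist y y' := by rw [Real.sqrt_sq (by positivity)]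

/-- The graph of `gmap` lies on the sphere. -/
lemma gmap_mem_sphere (m : ℕ) {s : ℝ} (hs : s * s = 1) {y : Fm (m+2)} (hy : ‖y‖ ≤ 1) :
    gmap m s y ∈ sphere (0 : Fm (m+3)) 1 := by
  have hns : ‖gmap m s y‖ ^ 2 = 1 := by
    rw [euclid_norm_sq, Fin.sum_univ_succ]
    have h0 : gmap m s y 0 = s * Real.sqrt (1 - ‖y‖ ^ 2) := rfl
    have hsq : Real.sqrt (1 - ‖y‖ ^ 2) ^ 2 = 1 - ‖y‖ ^ 2 := by
      apply Real.sq_sqrt; nlinarith [norm_nonneg y]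
    have htail : (∑ i : Fin (m+2), gmap m s y i.succ ^ 2) = ‖y‖ ^ 2 := by
      rw [euclid_norm_sq]; rfl
    rw [h0, htail, mul_pow, hsq]; nlinarith
  rw [mem_sphere_iff_norm, sub_zero]
  nlinarith [norm_nonneg (gmap m s y)]

lemma barNormSq_gmap (m : ℕ) (s : ℝ) (y : Fm (m+2)) :
    barNormSq (m+2) (gmap m s y) = tailSq y := by
  rw [barNormSq_tailSq]; rfl

/-- Points on the sphere with `δ ≤ s * x 0` and small bar part are in the graph image. -/
lemma piece_subset (m : ℕ) {s δ ρ : ℝ} (hs : s * s = 1) (hδ : 0 < δ) :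
    {x : Fm (m+3) | x ∈ sphere (0 : Fm (m+3)) 1 ∧ δ ≤ s * x 0 ∧ barNormSq (m+2) x < ρ} ⊆
      gmap m s '' (closedBall (0 : Fm (m+2)) (Real.sqrt (1 - δ^2)) ∩ {y | tailSq y < ρ}) := by
  rintro x ⟨hx, hsx, hbar⟩
  set y : Fm (m+2) := WithLp.toLp 2 (fun i => x i.succ : Fin (m+2) → ℝ) with hy
  have hsum := mem_sphere_sum x hx
  rw [Fin.sum_univ_succ] at hsum
  have hny : ‖y‖ ^ 2 = 1 - x 0 ^ 2 := by
    rw [euclid_norm_sq]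
    simp only [hy, PiLp.toLp_apply]
    linarith
  have hs1 : |s| = 1 := by
    have : |s| ^ 2 = 1 := by rw [sq_abs]; nlinarith
    nlinarith [abs_nonneg s]
  have hx0 : δ ^ 2 ≤ x 0 ^ 2 := by
    have : (s * x 0) ^ 2 = x 0 ^ 2 := by rw [mul_pow]; nlinarith
    nlinarith
  refine ⟨y, ⟨?_, ?_⟩, ?_⟩
  · rw [mem_closedBall, dist_zero_right]
    have h1 : ‖y‖ ^ 2 ≤ 1 - δ ^ 2 := by linarith
    calc ‖y‖ = Real.sqrt (‖y‖ ^ 2) := by rw [Real.sqrt_sq (norm_nonneg _)]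
      _ ≤ Real.sqrt (1 - δ ^ 2) := Real.sqrt_le_sqrt h1
  · show tailSq y < ρ
    rwa [barNormSq_tailSq] at hbar
  · -- gmap m s y = x
    ext i
    refine Fin.cases ?_ (fun i => rfl) i
    show s * Real.sqrt (1 - ‖y‖ ^ 2) = x 0
    rw [hny]
    have : Real.sqrt (1 - (1 - x 0 ^2)) = |x 0| := by
      rw [show 1 - (1 - x 0 ^2) = x 0 ^2 by ring, Real.sqrt_sq_eq_abs]
    rw [this]
    have habs : |x 0| = s * x 0 := by
      rw [← abs_of_pos (lt_of_lt_of_le hδ hsx), abs_mul, hs1, one_mul]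
    rw [habs, ← mul_assoc, hs, one_mul]

/-- Coordinate swap isometry of Euclidean space. -/
def swapIso (k : ℕ) (i : Fin k) [NeZero k] : Fm k ≃ᵢ Fm k :=
  (LinearIsometryEquiv.piLpCongrLeft 2 ℝ ℝ (Equiv.swap (0 : Fin k) i)).toIsometryEquiv

lemma swapIso_apply (k : ℕ) (i : Fin k) [NeZero k] (x : Fm k) (j : Fin k) :
    swapIso k i x j = x (Equiv.swap (0 : Fin k) i j) := by
  simp only [swapIso, LinearIsometryEquiv.coe_toIsometryEquiv,
    LinearIsometryEquiv.piLpCongrLeft_apply]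
  rw [show (Equiv.piCongrLeft' (fun _ : Fin k => ℝ) (Equiv.swap (0 : Fin k) i) x) j
    = x ((Equiv.swap (0 : Fin k) i).symm j) from rfl, Equiv.symm_swap]

lemma swapIso_mem_sphere (k : ℕ) (i : Fin k) [NeZero k] (x : Fm k)
    (hx : x ∈ sphere (0 : Fm k) 1) : swapIso k i x ∈ sphere (0 : Fm k) 1 := by
  have := (swapIso k i).isometry
  rw [mem_sphere_iff_norm, sub_zero] at hx ⊢
  have h0 : swapIso k i (0 : Fm k) = 0 := by
    ext j
    rw [swapIso_apply]
    rfl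
  calc ‖swapIso k i x‖ = dist (swapIso k i x) (swapIso k i 0) := by rw [h0, dist_zero_right]
    _ = dist x 0 := this.dist_eq x 0
    _ = 1 := by rwa [dist_zero_right]

/-- The `A`-pieces: swap moves piece `i` onto piece `0`. -/
lemma pieceA_eq_image (m : ℕ) (i : Fin (m+3)) (s δ : ℝ) :
    {x : Fm (m+3) | x ∈ sphere (0 : Fm (m+3)) 1 ∧ δ ≤ s * x i}
      = swapIso (m+3) i '' {x | x ∈ sphere (0 : Fm (m+3)) 1 ∧ δ ≤ s * x 0} := by
  ext x
  constructor
  · rintro ⟨hx, hsx⟩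
    refine ⟨swapIso (m+3) i x, ⟨swapIso_mem_sphere _ _ _ hx, ?_⟩, ?_⟩
    · rw [swapIso_apply, Equiv.swap_apply_left]
      exact hsx
    · ext j
      rw [swapIso_apply, swapIso_apply, Equiv.swap_apply_self]
  · rintro ⟨w, ⟨hw, hsw⟩, rfl⟩
    refine ⟨swapIso_mem_sphere _ _ _ hw, ?_⟩
    rw [swapIso_apply, Equiv.swap_apply_right]
    exact hsw

lemma barNormSq_swap01 (m : ℕ) (x : Fm (m+3)) :
    barNormSq (m+2) (swapIso (m+3) 1 x) = barNormSq (m+2) x := by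
  unfold barNormSq
  refine Finset.sum_congr rfl (fun q hq => ?_)
  rw [Finset.mem_filter] at hq
  rw [swapIso_apply, Equiv.swap_apply_of_ne_of_ne hq.2.1 hq.2.2]

/-- The `B`-pieces with the bar condition, swapping coordinates 0 and 1. -/
lemma pieceB_eq_image (m : ℕ) (s δ ρ : ℝ) :
    {x : Fm (m+3) | x ∈ sphere (0 : Fm (m+3)) 1 ∧ δ ≤ s * x 1 ∧ barNormSq (m+2) x < ρ}
      = swapIso (m+3) 1 ''
        {x | x ∈ sphere (0 : Fm (m+3)) 1 ∧ δ ≤ s * x 0 ∧ barNormSq (m+2) x < ρ} := by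
  ext x
  constructor
  · rintro ⟨hx, hsx, hbar⟩
    refine ⟨swapIso (m+3) 1 x, ⟨swapIso_mem_sphere _ _ _ hx, ?_, ?_⟩, ?_⟩
    · rw [swapIso_apply, Equiv.swap_apply_left]
      exact hsx
    · rwa [barNormSq_swap01]
    · ext j
      rw [swapIso_apply, swapIso_apply, Equiv.swap_apply_self]
  · rintro ⟨w, ⟨hw, hsw, hbar⟩, rfl⟩
    refine ⟨swapIso_mem_sphere _ _ _ hw, ?_, ?_⟩
    · rw [swapIso_apply, Equiv.swap_apply_right]
      exact hsw
    · rwa [barNormSq_swap01]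

/-- Coverage for (A): every sphere point has a big coordinate. -/
lemma exists_big_coord (m : ℕ) (x : Fm (m+3)) (hx : x ∈ sphere (0 : Fm (m+3)) 1) :
    ∃ i : Fin (m+3), ∃ s : ℝ, s * s = 1 ∧ ((m+3 : ℝ))⁻¹ ≤ s * x i := by
  have hsum := mem_sphere_sum x hx
  have hcard : ∃ i : Fin (m+3), ((m+3:ℝ))⁻¹ ≤ x i ^ 2 := by
    by_contra h
    push_neg at h
    have : (∑ i, x i ^ 2) < ∑ _i : Fin (m+3), ((m+3:ℝ))⁻¹ :=
      Finset.sum_lt_sum_of_nonempty ⟨0, Finset.mem_univ 0⟩ (fun i _ => h i)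
    rw [hsum, Finset.sum_const, Finset.card_univ, Fintype.card_fin] at this
    have h3 : (0:ℝ) < (m+3:ℝ) := by positivity
    rw [nsmul_eq_mul] at this
    push_cast at this
    rw [mul_inv_cancel₀ (ne_of_gt h3)] at this
    exact lt_irrefl _ this
  obtain ⟨i, hi⟩ := hcard
  have habs : ((m+3:ℝ))⁻¹ ≤ |x i| := by
    have h1 : ((m+3:ℝ))⁻¹ ≤ 1 := by
      rw [inv_le_one_iff₀]; right; push_cast; linarith
    have h2 : (((m+3:ℝ))⁻¹)^2 ≤ x i ^ 2 := by
      nlinarith [h1, hi, inv_pos.2 (show (0:ℝ) < m+3 by positivity)]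
    calc ((m+3:ℝ))⁻¹ = Real.sqrt ((((m+3:ℝ))⁻¹)^2) := by rw [Real.sqrt_sq (by positivity)]
      _ ≤ Real.sqrt (x i ^ 2) := Real.sqrt_le_sqrt h2
      _ = |x i| := Real.sqrt_sq_eq_abs _
  rcases le_or_gt 0 (x i) with h | h
  · exact ⟨i, 1, by norm_num, by rwa [one_mul, ← abs_of_nonneg h]⟩
  · exact ⟨i, -1, by norm_num, by rw [neg_one_mul, ← abs_of_neg h]; exact habs⟩

/-- Coverage for (B): points with small bar part have a big 0 or 1 coordinate. -/
lemma exists_big_coord01 (m : ℕ) (x : Fm (m+3)) (hx : x ∈ sphere (0 : Fm (m+3)) 1)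
    {ρ : ℝ} (hρ0 : 0 ≤ ρ) (hρ : ρ ≤ 1/2) (hbar : barNormSq (m+2) x < ρ^2) :
    ∃ i : Fin (m+3), (i = 0 ∨ i = 1) ∧ ∃ s : ℝ, s * s = 1 ∧ (1:ℝ)/2 ≤ s * x i := by
  obtain ⟨hb1, hb2⟩ := barNormSq_le_one' m x hx
  have hbig : 3/4 ≤ x 0 ^2 + x 1 ^2 := by nlinarith [pow_le_pow_left₀ hρ0 hρ 2]
  have : (1:ℝ)/4 ≤ x 0 ^2 ∨ (1:ℝ)/4 ≤ x 1 ^2 := by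
    by_contra h
    push_neg at h
    nlinarith [h.1, h.2]
  have key : ∀ i : Fin (m+3), (1:ℝ)/4 ≤ x i ^2 → ∃ s : ℝ, s * s = 1 ∧ (1:ℝ)/2 ≤ s * x i := by
    intro i hi
    have habs : (1:ℝ)/2 ≤ |x i| := by
      calc (1:ℝ)/2 = Real.sqrt (1/4) := by
            rw [show (1:ℝ)/4 = (1/2)^2 by norm_num, Real.sqrt_sq (by norm_num)]
        _ ≤ Real.sqrt (x i ^2) := Real.sqrt_le_sqrt hi
        _ = |x i| := Real.sqrt_sq_eq_abs _
    rcases le_or_gt 0 (x i) with h | h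
    · exact ⟨1, by norm_num, by rwa [one_mul, ← abs_of_nonneg h]⟩
    · exact ⟨-1, by norm_num, by rw [neg_one_mul, ← abs_of_neg h]; exact habs⟩
  rcases this with h | h
  · exact ⟨0, Or.inl rfl, key 0 h⟩
  · exact ⟨1, Or.inr rfl, key 1 h⟩

-- the Hausdorff measure on `Fm (m+2)` with exponent `m+2` is additive Haar
instance haarFm (m : ℕ) : ((μH[(m:ℝ)+2]) : Measure (Fm (m+2))).IsAddHaarMeasure := by
  have h : ((m:ℝ)+2) = ((finrank ℝ (Fm (m+2)) : ℕ) : ℝ) := by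
    rw [finrank_euclideanSpace_fin]; push_cast; ring
  rw [h]
  infer_instance

lemma ball_meas (m : ℕ) (c : Fm (m+2)) {r : ℝ} (hr : 0 ≤ r) :
    (μH[(m:ℝ)+2] : Measure (Fm (m+2))) (ball c r)
      = ENNReal.ofReal (r ^ (m+2)) * (μH[(m:ℝ)+2] : Measure (Fm (m+2))) (ball 0 1) := by
  rw [Measure.addHaar_ball _ c hr, finrank_euclideanSpace_fin]

def e0 (m : ℕ) : Fm (m+2) := EuclideanSpace.single 0 1

lemma e0_apply_zero (m : ℕ) : e0 m 0 = 1 := by simp [e0, EuclideanSpace.single_apply]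

lemma e0_apply_succ (m : ℕ) (i : Fin (m+1)) : e0 m i.succ = 0 := by
  simp [e0, EuclideanSpace.single_apply, (Fin.succ_ne_zero i)]

lemma smul_e0_apply (m : ℕ) (a : ℝ) (j : Fin (m+2)) : (a • e0 m) j = a * e0 m j := rfl

lemma sub_apply' {k : ℕ} (x y : Fm k) (j : Fin k) : (x - y) j = x j - y j := rfl

lemma dist_smul_e0 (m : ℕ) (a b : ℝ) : dist (a • e0 m) (b • e0 m) = |a - b| := by
  rw [dist_eq_norm, ← sub_smul, norm_smul]
  have : ‖e0 m‖ = 1 := by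
    rw [e0, EuclideanSpace.norm_single]; norm_num
  rw [this, mul_one, Real.norm_eq_abs]

/-- Lower bound for the open cylinder. -/
lemma cyl_lower (m : ℕ) {ρ : ℝ} (h0 : 0 < ρ) (h2 : ρ ≤ 1/2) :
    ENNReal.ofReal ((2:ℝ)⁻¹^(m+4) * ρ^(m+1)) * (μH[(m:ℝ)+2] : Measure (Fm (m+2))) (ball 0 1)
      ≤ (μH[(m:ℝ)+2] : Measure (Fm (m+2)))
          {y : Fm (m+2) | y 0 ∈ Ioo (0:ℝ) (1/2) ∧ tailSq y < ρ^2} := by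
  set ν := (μH[(m:ℝ)+2] : Measure (Fm (m+2)))
  set M := Nat.floor (1/(2*ρ)) with hM
  have hMle : (M:ℝ) ≤ 1/(2*ρ) := Nat.floor_le (by positivity)
  have hMge : 1/(4*ρ) ≤ (M:ℝ) := by
    rcases le_or_gt ρ (1/4) with h | h
    · have h1 : 1/(2*ρ) < (M:ℝ) + 1 := Nat.lt_floor_add_one _
      have h4 : (1:ℝ) ≤ 1/(4*ρ) := by rw [le_div_iff₀ (by positivity)]; linarith
      have : 1/(2*ρ) = 2 * (1/(4*ρ)) := by field_simp; ring
      linarith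
    · have hM1 : 1 ≤ M := by
        rw [hM]
        apply Nat.le_floor
        rw [Nat.cast_one, le_div_iff₀ (by positivity)]
        linarith
      have : 1/(4*ρ) ≤ 1 := by rw [div_le_one (by positivity)]; linarith
      calc 1/(4*ρ) ≤ 1 := this
        _ ≤ (M:ℝ) := by exact_mod_cast hM1
  set c : ℕ → Fm (m+2) := fun k => (((k:ℝ)+1/2)*ρ) • e0 m with hc
  have hballs : ∀ k ∈ Finset.range M, ball (c k) (ρ/2) ⊆
      {y : Fm (m+2) | y 0 ∈ Ioo (0:ℝ) (1/2) ∧ tailSq y < ρ^2} := by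
    intro k hk y hy
    rw [mem_ball] at hy
    rw [Finset.mem_range] at hk
    have hk1 : (k:ℝ) + 1 ≤ M := by exact_mod_cast Nat.succ_le_of_lt hk
    have hy0 : |y 0 - ((k:ℝ)+1/2)*ρ| < ρ/2 := by
      have := coord_abs_sub_le y (c k) 0
      rw [hc] at this
      simp only [smul_e0_apply, e0_apply_zero, mul_one] at this
      exact lt_of_le_of_lt this hy
    rw [abs_lt] at hy0
    constructor
    · constructor
      · have : (0:ℝ) ≤ (k:ℝ) * ρ := by positivity
        nlinarith
      · have h3 : 1/(2*ρ) * ρ = 1/2 := by field_simp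
        have hMρ : (M:ℝ) * ρ ≤ 1/2 := by
          calc (M:ℝ) * ρ ≤ 1/(2*ρ) * ρ := mul_le_mul_of_nonneg_right hMle h0.le
            _ = 1/2 := h3
        nlinarith
    · show tailSq y < ρ^2
      have htail : tailSq y ≤ dist y (c k) ^ 2 := by
        rw [euclid_dist_sq, Fin.sum_univ_succ]
        unfold tailSq
        have hterm : ∀ i : Fin (m+1), (y i.succ)^2 = (y i.succ - c k i.succ)^2 := by
          intro i
          rw [hc]
          simp [smul_e0_apply, e0_apply_succ]
        rw [Finset.sum_congr rfl (fun i _ => hterm i)]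
        nlinarith [sq_nonneg (y 0 - c k 0)]
      have : dist y (c k) ^2 < (ρ/2)^2 := by
        apply pow_lt_pow_left₀ hy dist_nonneg
        norm_num
      nlinarith
  have hdisj : (↑(Finset.range M) : Set ℕ).PairwiseDisjoint (fun k => ball (c k) (ρ/2)) := by
    intro k _ l _ hkl
    rw [Function.onFun, Set.disjoint_left]
    intro z hzk hzl
    rw [mem_ball] at hzk hzl
    have hdist : dist (c k) (c l) ≤ dist z (c k) + dist z (c l) := by
      rw [dist_comm z (c k)]
      exact dist_triangle _ _ _
    have hcc : dist (c k) (c l) = |(k:ℝ) - (l:ℝ)| * ρ := by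
      rw [hc]
      rw [dist_smul_e0]
      rw [show ((k:ℝ)+1/2)*ρ - ((l:ℝ)+1/2)*ρ = ((k:ℝ) - (l:ℝ)) * ρ by ring, abs_mul,
        abs_of_pos h0]
    have hge : (1:ℝ) ≤ |(k:ℝ) - (l:ℝ)| := by
      have : k ≠ l := hkl
      have h1 : (1:ℤ) ≤ |(k:ℤ) - (l:ℤ)| := by
        apply Int.one_le_abs
        simpa using sub_ne_zero.2 (by exact_mod_cast this : (k:ℤ) ≠ (l:ℤ))
      have : ((1:ℤ):ℝ) ≤ ((|(k:ℤ) - (l:ℤ)|:ℤ):ℝ) := by exact_mod_cast h1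
      push_cast at this
      linarith
    nlinarith [hdist, hcc, hzk, hzl]
  calc ENNReal.ofReal ((2:ℝ)⁻¹^(m+4) * ρ^(m+1)) * ν (ball 0 1)
      ≤ ENNReal.ofReal ((M:ℝ) * (ρ/2)^(m+2)) * ν (ball 0 1) := by
        apply mul_le_mul_left
        apply ENNReal.ofReal_le_ofReal
        have hx : (2:ℝ)⁻¹^(m+4) * ρ^(m+1) = (1/(4*ρ)) * (ρ/2)^(m+2) := by
          field_simp
          ring
        rw [hx]
        apply mul_le_mul_of_nonneg_right hMge (by positivity)
    _ = ∑ k ∈ Finset.range M, ν (ball (c k) (ρ/2)) := by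
        rw [Finset.sum_congr rfl (fun k _ => ball_meas m (c k) (by positivity : (0:ℝ) ≤ ρ/2)),
          Finset.sum_const, Finset.card_range, nsmul_eq_mul, ← mul_assoc]
        congr 1
        rw [← ENNReal.ofReal_natCast M, ← ENNReal.ofReal_mul (by positivity)]
    _ = ν (⋃ k ∈ Finset.range M, ball (c k) (ρ/2)) :=
        (measure_biUnion_finset hdisj (fun k _ => measurableSet_ball)).symm
    _ ≤ ν {y : Fm (m+2) | y 0 ∈ Ioo (0:ℝ) (1/2) ∧ tailSq y < ρ^2} := by
        apply measure_mono
        exact Set.iUnion₂_subset hballs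

/-- Upper bound for the closed cylinder. -/
lemma cyl_upper (m : ℕ) {ρ : ℝ} (h0 : 0 < ρ) (h1 : ρ ≤ 1) :
    (μH[(m:ℝ)+2] : Measure (Fm (m+2))) {y : Fm (m+2) | |y 0| ≤ 1 ∧ tailSq y < ρ^2}
      ≤ ENNReal.ofReal (5 * 2^(m+2) * ρ^(m+1))
          * (μH[(m:ℝ)+2] : Measure (Fm (m+2))) (ball 0 1) := by
  set ν := (μH[(m:ℝ)+2] : Measure (Fm (m+2)))
  set K := Nat.floor (4/ρ) with hK
  have hKle : (K:ℝ) ≤ 4/ρ := Nat.floor_le (by positivity)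
  set c : ℕ → Fm (m+2) := fun k => ((k:ℝ)*ρ - 2) • e0 m with hc
  have hcover : {y : Fm (m+2) | |y 0| ≤ 1 ∧ tailSq y < ρ^2}
      ⊆ ⋃ k ∈ Finset.range (K+1), ball (c k) (2*ρ) := by
    rintro y ⟨hy0, hytail⟩
    have hpos : (0:ℝ) ≤ (y 0 + 2)/ρ := by
      have h := hy0
      rw [abs_le] at h
      apply div_nonneg (by linarith) h0.le
    set k := Nat.floor ((y 0 + 2)/ρ) with hk
    have hkle : (k:ℝ) ≤ (y 0 + 2)/ρ := Nat.floor_le hpos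
    have hklt : (y 0 + 2)/ρ < (k:ℝ) + 1 := Nat.lt_floor_add_one _
    rw [abs_le] at hy0
    have hkK : k ∈ Finset.range (K+1) := by
      rw [Finset.mem_range, Nat.lt_succ_iff, hk, hK]
      apply Nat.floor_le_floor
      gcongr
      · linarith
    refine Set.mem_biUnion hkK ?_
    rw [mem_ball]
    have hb1 : 0 ≤ y 0 + 2 - (k:ℝ)*ρ := by
      have := mul_le_mul_of_nonneg_right hkle h0.le
      rw [div_mul_cancel₀ _ h0.ne'] at this
      linarith
    have hb2 : y 0 + 2 - (k:ℝ)*ρ < ρ := by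
      have := mul_lt_mul_of_pos_right hklt h0
      rw [div_mul_cancel₀ _ h0.ne'] at this
      nlinarith
    have hd2 : dist y (c k) ^ 2 < 2 * ρ^2 := by
      rw [euclid_dist_sq, Fin.sum_univ_succ]
      have hc0 : c k 0 = (k:ℝ)*ρ - 2 := by
        rw [hc]; simp only [smul_e0_apply, e0_apply_zero, mul_one]
      have hterm : ∀ i : Fin (m+1), (y i.succ - c k i.succ)^2 = (y i.succ)^2 := by
        intro i
        rw [hc]
        simp [smul_e0_apply, e0_apply_succ]
      rw [Finset.sum_congr rfl (fun i _ => hterm i), hc0]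
      have : tailSq y < ρ^2 := hytail
      unfold tailSq at this
      nlinarith [sq_nonneg (y 0 - ((k:ℝ)*ρ - 2))]
    have h2ρ : (0:ℝ) < 2*ρ := by positivity
    nlinarith [dist_nonneg (x := y) (y := c k)]
  calc ν {y : Fm (m+2) | |y 0| ≤ 1 ∧ tailSq y < ρ^2}
      ≤ ν (⋃ k ∈ Finset.range (K+1), ball (c k) (2*ρ)) := measure_mono hcover
    _ ≤ ∑ k ∈ Finset.range (K+1), ν (ball (c k) (2*ρ)) := measure_biUnion_finset_le _ _
    _ = (K+1 : ℕ) * (ENNReal.ofReal ((2*ρ) ^ (m+2)) * ν (ball 0 1)) := by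
        rw [Finset.sum_congr rfl (fun k _ => ball_meas m (c k) (by positivity : (0:ℝ) ≤ 2*ρ)),
          Finset.sum_const, Finset.card_range, nsmul_eq_mul]
    _ ≤ ENNReal.ofReal (5 * 2^(m+2) * ρ^(m+1)) * ν (ball 0 1) := by
        rw [← mul_assoc]
        apply mul_le_mul_left
        rw [← ENNReal.ofReal_natCast (K+1), ← ENNReal.ofReal_mul (by positivity)]
        apply ENNReal.ofReal_le_ofReal
        have hK5 : ((K+1 : ℕ):ℝ) ≤ 5/ρ := by
          push_cast
          have : (1:ℝ) ≤ 1/ρ := by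
            rw [le_div_iff₀ h0]; linarith
          have h5 : (5:ℝ)/ρ = 4/ρ + 1/ρ := by ring
          linarith [hKle]
        calc ((K+1 : ℕ):ℝ) * (2*ρ)^(m+2) ≤ (5/ρ) * (2*ρ)^(m+2) := by
              apply mul_le_mul_of_nonneg_right hK5 (by positivity)
          _ = 5 * 2^(m+2) * ρ^(m+1) := by
              rw [mul_pow]
              field_simp
              ring
-- convenient abbreviations
lemma hd_nonneg (m : ℕ) : (0:ℝ) ≤ (m:ℝ)+2 := by positivity

/-- (A): the Hausdorff measure of the sphere is finite. -/
lemma sphere_meas_lt_top (m : ℕ) :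
    (μH[(m:ℝ)+2] : Measure (Fm (m+3))) (sphere (0 : Fm (m+3)) 1) < ∞ := by
  set μ := (μH[(m:ℝ)+2] : Measure (Fm (m+3)))
  set δ₀ : ℝ := ((m+3 : ℝ))⁻¹ with hδ₀
  have hδpos : 0 < δ₀ := by positivity
  have hδ1 : δ₀ ≤ 1 := by
    rw [hδ₀, inv_le_one_iff₀]; right; push_cast; linarith
  set P : Fin (m+3) → ℝ → Set (Fm (m+3)) :=
    fun i s => {x | x ∈ sphere (0 : Fm (m+3)) 1 ∧ δ₀ ≤ s * x i} with hP
  have hcover : sphere (0 : Fm (m+3)) 1 ⊆ ⋃ i : Fin (m+3), (P i 1 ∪ P i (-1)) := by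
    intro x hx
    obtain ⟨i, s, hs, hsx⟩ := exists_big_coord m x hx
    rcases mul_self_eq_one_iff.1 hs with rfl | rfl
    · exact Set.mem_iUnion.2 ⟨i, Or.inl ⟨hx, hsx⟩⟩
    · exact Set.mem_iUnion.2 ⟨i, Or.inr ⟨hx, hsx⟩⟩
  have hPfin : ∀ (s : ℝ), s * s = 1 → μ (P 0 s) < ∞ := by
    intro s hs
    have hsub : P 0 s ⊆ gmap m s ''
        (closedBall (0 : Fm (m+2)) (Real.sqrt (1 - δ₀^2)) ∩ {y | tailSq y < 2}) := by
      intro x hx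
      apply piece_subset m hs hδpos
      exact ⟨hx.1, hx.2, by linarith [(barNormSq_le_one' m x hx.1).1]⟩
    have hs1 : |s| = 1 := by
      have : |s|^2 = 1 := by rw [sq_abs]; nlinarith
      nlinarith [abs_nonneg s]
    have hlip := lipschitzOnWith_gmap m s δ₀ (le_of_eq hs1) hδpos hδ1
    calc μ (P 0 s) ≤ μ (gmap m s ''
          (closedBall (0 : Fm (m+2)) (Real.sqrt (1 - δ₀^2)) ∩ {y | tailSq y < 2})) :=
          measure_mono hsub
      _ ≤ μ (gmap m s '' closedBall (0 : Fm (m+2)) (Real.sqrt (1 - δ₀^2))) :=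
          measure_mono (Set.image_mono Set.inter_subset_left)
      _ ≤ (Real.toNNReal (1 + δ₀⁻¹) : ℝ≥0∞) ^ ((m:ℝ)+2) *
            (μH[(m:ℝ)+2] : Measure (Fm (m+2))) (closedBall 0 (Real.sqrt (1 - δ₀^2))) :=
          hlip.hausdorffMeasure_image_le (hd_nonneg m)
      _ < ∞ := by
          apply ENNReal.mul_lt_top
          · exact ENNReal.rpow_lt_top_of_nonneg (hd_nonneg m) ENNReal.coe_ne_top
          · exact (isCompact_closedBall _ _).measure_lt_top
  have hPiece : ∀ (i : Fin (m+3)) (s : ℝ), s * s = 1 → μ (P i s) < ∞ := by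
    intro i s hs
    have := pieceA_eq_image m i s δ₀
    rw [hP]
    simp only
    rw [this, IsometryEquiv.hausdorffMeasure_image]
    exact hPfin s hs
  calc μ (sphere (0 : Fm (m+3)) 1) ≤ μ (⋃ i : Fin (m+3), (P i 1 ∪ P i (-1))) :=
        measure_mono hcover
    _ ≤ ∑ i : Fin (m+3), μ (P i 1 ∪ P i (-1)) := measure_iUnion_fintype_le μ _
    _ < ∞ := by
        apply ENNReal.sum_lt_top.2
        intro i _
        calc μ (P i 1 ∪ P i (-1)) ≤ μ (P i 1) + μ (P i (-1)) := measure_union_le _ _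
          _ < ∞ := ENNReal.add_lt_top.2
              ⟨hPiece i 1 (by norm_num), hPiece i (-1) (by norm_num)⟩

/-- (B): upper bound on the measure of the bar-neighbourhood, all radii. -/
lemma Ameas_upper (m : ℕ) : ∃ C : ℝ, 0 < C ∧ ∀ ρ : ℝ, 0 < ρ →
    (μH[(m:ℝ)+2] : Measure (Fm (m+3)))
        {x | x ∈ sphere (0 : Fm (m+3)) 1 ∧ barNormSq (m+2) x < ρ^2}
      ≤ ENNReal.ofReal (C * ρ^(m+1)) := by
  set μ := (μH[(m:ℝ)+2] : Measure (Fm (m+3)))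
  set ν := (μH[(m:ℝ)+2] : Measure (Fm (m+2)))
  set v : ℝ := (ν (ball 0 1)).toReal with hv
  have hvfin : ν (ball 0 1) ≠ ∞ := measure_ball_lt_top.ne
  have hvnn : 0 ≤ v := ENNReal.toReal_nonneg
  set w : ℝ := (μ (sphere (0 : Fm (m+3)) 1)).toReal with hw
  have hwfin : μ (sphere (0 : Fm (m+3)) 1) ≠ ∞ := (sphere_meas_lt_top m).ne
  have hwnn : 0 ≤ w := ENNReal.toReal_nonneg
  -- the one-piece bound
  have hPB : ∀ (s : ℝ), s * s = 1 → ∀ ρ : ℝ, 0 < ρ → ρ ≤ 1/2 →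
      μ {x | x ∈ sphere (0 : Fm (m+3)) 1 ∧ (1:ℝ)/2 ≤ s * x 0 ∧ barNormSq (m+2) x < ρ^2}
        ≤ ENNReal.ofReal ((3:ℝ)^(m+2) * (5 * 2^(m+2) * ρ^(m+1)) * v) := by
    intro s hs ρ hρ0 hρ2
    have hs1 : |s| = 1 := by
      have : |s|^2 = 1 := by rw [sq_abs]; nlinarith
      nlinarith [abs_nonneg s]
    have hlip := lipschitzOnWith_gmap m s (1/2) (le_of_eq hs1) (by norm_num) (by norm_num)
    have hsub := piece_subset m (ρ := ρ^2) hs (show (0:ℝ) < 1/2 by norm_num)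
    have hTsub : closedBall (0 : Fm (m+2)) (Real.sqrt (1 - (1/2:ℝ)^2)) ∩ {y | tailSq y < ρ^2}
        ⊆ {y : Fm (m+2) | |y 0| ≤ 1 ∧ tailSq y < ρ^2} := by
      rintro y ⟨hy1, hy2⟩
      refine ⟨?_, hy2⟩
      rw [mem_closedBall] at hy1
      have h1 : |y 0 - (0: Fm (m+2)) 0| ≤ dist y 0 := coord_abs_sub_le y 0 0
      have h2 : (0: Fm (m+2)) 0 = 0 := rfl
      rw [h2, sub_zero] at h1
      have h3 : Real.sqrt (1 - (1/2:ℝ)^2) ≤ 1 := by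
        rw [show (1:ℝ) = Real.sqrt 1 by rw [Real.sqrt_one]]
        apply Real.sqrt_le_sqrt
        norm_num
      linarith
    have hK : (Real.toNNReal (1 + (1/2:ℝ)⁻¹) : ℝ≥0∞) ^ ((m:ℝ)+2)
        = ENNReal.ofReal ((3:ℝ)^(m+2)) := by
      have h1 : Real.toNNReal (1 + (1/2:ℝ)⁻¹) = (3 : ℝ≥0) := by
        ext
        rw [Real.coe_toNNReal _ (by norm_num)]
        norm_num
      rw [h1]
      rw [show ((m:ℝ)+2) = ((m+2 : ℕ) : ℝ) by push_cast; ring, ENNReal.rpow_natCast]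
      rw [ENNReal.ofReal_pow (by norm_num)]
      norm_num
    calc μ {x | x ∈ sphere (0 : Fm (m+3)) 1 ∧ (1:ℝ)/2 ≤ s * x 0 ∧ barNormSq (m+2) x < ρ^2}
        ≤ μ (gmap m s '' (closedBall (0 : Fm (m+2)) (Real.sqrt (1 - (1/2:ℝ)^2))
            ∩ {y | tailSq y < ρ^2})) := measure_mono hsub
      _ ≤ (Real.toNNReal (1 + (1/2:ℝ)⁻¹) : ℝ≥0∞) ^ ((m:ℝ)+2) *
            ν (closedBall (0 : Fm (m+2)) (Real.sqrt (1 - (1/2:ℝ)^2)) ∩ {y | tailSq y < ρ^2}) := by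
          apply (hlip.mono Set.inter_subset_left).hausdorffMeasure_image_le (hd_nonneg m)
      _ ≤ (Real.toNNReal (1 + (1/2:ℝ)⁻¹) : ℝ≥0∞) ^ ((m:ℝ)+2) *
            ν {y : Fm (m+2) | |y 0| ≤ 1 ∧ tailSq y < ρ^2} := by
          apply mul_le_mul_right
          exact measure_mono hTsub
      _ ≤ (Real.toNNReal (1 + (1/2:ℝ)⁻¹) : ℝ≥0∞) ^ ((m:ℝ)+2) *
            (ENNReal.ofReal (5 * 2^(m+2) * ρ^(m+1)) * ν (ball 0 1)) := by
          apply mul_le_mul_right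
          exact cyl_upper m hρ0 (by linarith)
      _ = ENNReal.ofReal ((3:ℝ)^(m+2) * (5 * 2^(m+2) * ρ^(m+1)) * v) := by
          rw [hK, show ν (ball 0 1) = ENNReal.ofReal v by
            rw [hv, ENNReal.ofReal_toReal hvfin],
            ← ENNReal.ofReal_mul (by positivity), ← ENNReal.ofReal_mul (by positivity)]
          congr 1
          ring
  -- combine four pieces for `ρ ≤ 1/2`
  set CB : ℝ := 4 * ((3:ℝ)^(m+2) * (5 * 2^(m+2)) * v) + 1 with hCB
  have hCBpos : 0 < CB := by positivity
  have hhalf : ∀ ρ : ℝ, 0 < ρ → ρ ≤ 1/2 →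
      μ {x | x ∈ sphere (0 : Fm (m+3)) 1 ∧ barNormSq (m+2) x < ρ^2}
        ≤ ENNReal.ofReal (CB * ρ^(m+1)) := by
    intro ρ hρ0 hρ2
    set PB : Fin (m+3) → ℝ → Set (Fm (m+3)) := fun i s =>
      {x | x ∈ sphere (0 : Fm (m+3)) 1 ∧ (1:ℝ)/2 ≤ s * x i ∧ barNormSq (m+2) x < ρ^2} with hPBdef
    have hcov : {x | x ∈ sphere (0 : Fm (m+3)) 1 ∧ barNormSq (m+2) x < ρ^2}
        ⊆ (PB 0 1 ∪ PB 0 (-1)) ∪ (PB 1 1 ∪ PB 1 (-1)) := by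
      rintro x ⟨hx, hbar⟩
      obtain ⟨i, hi01, s, hs, hsx⟩ := exists_big_coord01 m x hx hρ0.le hρ2 hbar
      rcases hi01 with rfl | rfl
      · rcases mul_self_eq_one_iff.1 hs with rfl | rfl
        · exact Or.inl (Or.inl ⟨hx, hsx, hbar⟩)
        · exact Or.inl (Or.inr ⟨hx, hsx, hbar⟩)
      · rcases mul_self_eq_one_iff.1 hs with rfl | rfl
        · exact Or.inr (Or.inl ⟨hx, hsx, hbar⟩)
        · exact Or.inr (Or.inr ⟨hx, hsx, hbar⟩)
    have hone : ∀ (i : Fin (m+3)), (i = 0 ∨ i = 1) → ∀ s : ℝ, s * s = 1 →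
        μ (PB i s) ≤ ENNReal.ofReal ((3:ℝ)^(m+2) * (5 * 2^(m+2) * ρ^(m+1)) * v) := by
      rintro i (rfl | rfl) s hs
      · exact hPB s hs ρ hρ0 hρ2
      · rw [hPBdef]
        simp only
        rw [pieceB_eq_image m s (1/2) (ρ^2), IsometryEquiv.hausdorffMeasure_image]
        exact hPB s hs ρ hρ0 hρ2
    calc μ {x | x ∈ sphere (0 : Fm (m+3)) 1 ∧ barNormSq (m+2) x < ρ^2}
        ≤ μ ((PB 0 1 ∪ PB 0 (-1)) ∪ (PB 1 1 ∪ PB 1 (-1))) := measure_mono hcov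
      _ ≤ (μ (PB 0 1) + μ (PB 0 (-1))) + (μ (PB 1 1) + μ (PB 1 (-1))) :=
          le_trans (measure_union_le _ _)
            (add_le_add (measure_union_le _ _) (measure_union_le _ _))
      _ ≤ ENNReal.ofReal ((3:ℝ)^(m+2) * (5 * 2^(m+2) * ρ^(m+1)) * v)
          + ENNReal.ofReal ((3:ℝ)^(m+2) * (5 * 2^(m+2) * ρ^(m+1)) * v)
          + (ENNReal.ofReal ((3:ℝ)^(m+2) * (5 * 2^(m+2) * ρ^(m+1)) * v)
          + ENNReal.ofReal ((3:ℝ)^(m+2) * (5 * 2^(m+2) * ρ^(m+1)) * v)) := by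
          apply add_le_add
          · exact add_le_add (hone 0 (Or.inl rfl) 1 (by norm_num))
              (hone 0 (Or.inl rfl) (-1) (by norm_num))
          · exact add_le_add (hone 1 (Or.inr rfl) 1 (by norm_num))
              (hone 1 (Or.inr rfl) (-1) (by norm_num))
      _ ≤ ENNReal.ofReal (CB * ρ^(m+1)) := by
          rw [← ENNReal.ofReal_add (by positivity) (by positivity),
            ← ENNReal.ofReal_add (by positivity) (by positivity)]
          apply ENNReal.ofReal_le_ofReal
          rw [hCB]
          nlinarith [pow_pos hρ0 (m+1)]
  -- extend to all radii
  refine ⟨CB + (w * 2^(m+1) + 1), by positivity, fun ρ hρ0 => ?_⟩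
  rcases le_or_gt ρ (1/2) with h | h
  · calc μ {x | x ∈ sphere (0 : Fm (m+3)) 1 ∧ barNormSq (m+2) x < ρ^2}
        ≤ ENNReal.ofReal (CB * ρ^(m+1)) := hhalf ρ hρ0 h
      _ ≤ ENNReal.ofReal ((CB + (w * 2^(m+1) + 1)) * ρ^(m+1)) := by
          apply ENNReal.ofReal_le_ofReal
          have h9 : 0 ≤ (w * 2^(m+1) + 1) * ρ^(m+1) := by positivity
          nlinarith [h9]
  · have h1 : (1:ℝ) ≤ (2*ρ)^(m+1) := by
      apply one_le_pow₀
      linarith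
    calc μ {x | x ∈ sphere (0 : Fm (m+3)) 1 ∧ barNormSq (m+2) x < ρ^2}
        ≤ μ (sphere (0 : Fm (m+3)) 1) := measure_mono (fun x hx => hx.1)
      _ = ENNReal.ofReal w := by rw [hw, ENNReal.ofReal_toReal hwfin]
      _ ≤ ENNReal.ofReal ((CB + (w * 2^(m+1) + 1)) * ρ^(m+1)) := by
          apply ENNReal.ofReal_le_ofReal
          rw [mul_pow] at h1
          nlinarith [pow_pos hρ0 (m+1), pow_pos (show (0:ℝ) < 2 by norm_num) (m+1)]

/-- (C): lower bound on the measure of the bar-neighbourhood. -/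
lemma Ameas_lower (m : ℕ) : ∃ c : ℝ, 0 < c ∧ ∀ ρ : ℝ, 0 < ρ → ρ ≤ 1/2 →
    ENNReal.ofReal (c * ρ^(m+1)) ≤
      (μH[(m:ℝ)+2] : Measure (Fm (m+3)))
        {x | x ∈ sphere (0 : Fm (m+3)) 1 ∧ barNormSq (m+2) x < ρ^2} := by
  set μ := (μH[(m:ℝ)+2] : Measure (Fm (m+3)))
  set ν := (μH[(m:ℝ)+2] : Measure (Fm (m+2)))
  set v : ℝ := (ν (ball 0 1)).toReal with hv
  have hvfin : ν (ball 0 1) ≠ ∞ := measure_ball_lt_top.ne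
  have hvpos : 0 < v := by
    rw [hv, ENNReal.toReal_pos_iff]
    exact ⟨measure_ball_pos ν 0 one_pos, measure_ball_lt_top⟩
  refine ⟨(2:ℝ)⁻¹^(m+4) * v, by positivity, fun ρ hρ0 hρ2 => ?_⟩
  set S : Set (Fm (m+2)) := {y | y 0 ∈ Ioo (0:ℝ) (1/2) ∧ tailSq y < ρ^2} with hS
  have himg : gmap m 1 '' S ⊆
      {x | x ∈ sphere (0 : Fm (m+3)) 1 ∧ barNormSq (m+2) x < ρ^2} := by
    rintro x ⟨y, ⟨hy0, hytail⟩, rfl⟩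
    have hny : ‖y‖ ≤ 1 := by
      have h1 : ‖y‖^2 = ∑ i, y i ^ 2 := euclid_norm_sq y
      have h2 : (∑ i, y i ^ 2) = y 0 ^2 + tailSq y := by
        rw [Fin.sum_univ_succ]; rfl
      have h3 : ‖y‖^2 ≤ 1 := by
        rw [h1, h2]
        rcases hy0 with ⟨hy01, hy02⟩
        nlinarith
      nlinarith [norm_nonneg y]
    exact ⟨gmap_mem_sphere m (by norm_num) hny, by rw [barNormSq_gmap]; exact hytail⟩
  calc ENNReal.ofReal ((2:ℝ)⁻¹^(m+4) * v * ρ^(m+1))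
      = ENNReal.ofReal ((2:ℝ)⁻¹^(m+4) * ρ^(m+1)) * ν (ball 0 1) := by
        rw [show ν (ball 0 1) = ENNReal.ofReal v by rw [hv, ENNReal.ofReal_toReal hvfin],
          ← ENNReal.ofReal_mul (by positivity)]
        congr 1
        ring
    _ ≤ ν S := cyl_lower m hρ0 hρ2
    _ ≤ (1 : ℝ≥0∞) ^ ((m:ℝ)+2) * μ (gmap m 1 '' S) := by
        have := (antilipschitz_gmap m 1).le_hausdorffMeasure_image (hd_nonneg m) S
        simpa using this
    _ ≤ μ {x | x ∈ sphere (0 : Fm (m+3)) 1 ∧ barNormSq (m+2) x < ρ^2} := by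
        rw [ENNReal.one_rpow, one_mul]
        exact measure_mono himg

lemma barNormSq_continuous (m : ℕ) : Continuous (barNormSq (m+2) : Fm (m+3) → ℝ) := by
  apply continuous_finset_sum
  intro q _
  have h : Continuous (fun x : Fm (m+3) => x q) :=
    (continuous_apply q).comp (PiLp.continuous_ofLp (p := 2) (β := fun _ : Fin (m+3) => ℝ))
  exact h.pow 2

lemma main_aux (m : ℕ) (β : ℝ) (hβ : 0 ≤ β) :
    ∃ c₁ c₂ : ℝ, 0 < c₁ ∧ 0 < c₂ ∧
      ∀ j : ℕ, 1 ≤ j →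
        c₁ * (j : ℝ) ^ (-(((m:ℝ)+2) - 1) / 2) ≤
            (∫ x in sphere (0 : Fm (m+3)) 1,
              (1 - barNormSq (m+2) x) ^ j *
                (1 + (j : ℝ)⁻¹ * barNormSq (m+2) x) ^ (2 * β) ∂(μH[(m:ℝ)+2])) ∧
          (∫ x in sphere (0 : Fm (m+3)) 1,
              (1 - barNormSq (m+2) x) ^ j *
                (1 + (j : ℝ)⁻¹ * barNormSq (m+2) x) ^ (2 * β) ∂(μH[(m:ℝ)+2])) ≤
            c₂ * (j : ℝ) ^ (-(((m:ℝ)+2) - 1) / 2) := by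
  obtain ⟨C, hCpos, hCb⟩ := Ameas_upper m
  obtain ⟨c, hcpos, hcb⟩ := Ameas_lower m
  set μ := (μH[(m:ℝ)+2] : Measure (Fm (m+3))) with hμ
  set sph := sphere (0 : Fm (m+3)) 1 with hsph
  have hsphm : MeasurableSet sph := isClosed_sphere.measurableSet
  have hW : μ sph < ∞ := sphere_meas_lt_top m
  have hbar_cont := barNormSq_continuous m
  have hbar_meas : Measurable (barNormSq (m+2) : Fm (m+3) → ℝ) := hbar_cont.measurable
  -- the summability constant
  set r : ℝ := Real.exp (-(1/4)) with hrdef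
  have hr0 : 0 < r := Real.exp_pos _
  have hr1 : r < 1 := by
    rw [hrdef, Real.exp_lt_one_iff]
    norm_num
  have hsumb : Summable (fun k : ℕ => ((k:ℝ)+1)^(m+1) * r^k) := by
    have h0 : Summable (fun k : ℕ => (k:ℝ)^(m+1) * r^k) :=
      summable_pow_mul_geometric_of_norm_lt_one (m+1)
        (by rw [Real.norm_eq_abs, abs_of_pos hr0]; exact hr1)
    have h1 : Summable (fun k : ℕ => ((k+1:ℕ):ℝ)^(m+1) * r^(k+1)) :=
      (summable_nat_add_iff 1).2 h0
    have h2 : Summable (fun k : ℕ => (((k+1:ℕ):ℝ)^(m+1) * r^(k+1)) * r⁻¹) :=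
      h1.mul_right r⁻¹
    apply h2.congr
    intro k
    push_cast
    field_simp
    rw [pow_succ]
    ring
  set SB : ℝ := ∑' k : ℕ, ((k:ℝ)+1)^(m+1) * r^k with hSBdef
  have hbnn : ∀ k : ℕ, 0 ≤ ((k:ℝ)+1)^(m+1) * r^k := fun k => by positivity
  have hSB1 : 1 ≤ SB := by
    have h := Summable.le_tsum hsumb 0 (fun k _ => hbnn k)
    simpa using h
  refine ⟨3/4 * c * (2:ℝ)⁻¹^(m+1),
    (2:ℝ)^(2*β) * C * SB * (2:ℝ)⁻¹^(m+1),
    by positivity,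
    by
      have h2β : (0:ℝ) < (2:ℝ)^(2*β) := Real.rpow_pos_of_pos (by norm_num) _
      positivity,
    fun j hj => ?_⟩
  set J : ℝ := (j:ℝ) with hJdef
  have hJ1 : 1 ≤ J := by rw [hJdef]; exact_mod_cast hj
  have hJ0 : (0:ℝ) < J := by linarith
  have hsJ1 : 1 ≤ Real.sqrt J := by
    rw [show (1:ℝ) = Real.sqrt 1 by rw [Real.sqrt_one]]
    exact Real.sqrt_le_sqrt hJ1
  have hsJ0 : 0 < Real.sqrt J := by linarith
  set ρ : ℝ := 1/(2*Real.sqrt J) with hρdef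
  have hρ0 : 0 < ρ := by positivity
  have hρhalf : ρ ≤ 1/2 := by
    rw [hρdef, div_le_div_iff₀ (by positivity) (by norm_num)]
    nlinarith
  have hρsq : ρ^2 = 1/(4*J) := by
    rw [hρdef, div_pow, mul_pow, Real.sq_sqrt hJ0.le]
    norm_num
  set f : Fm (m+3) → ℝ := fun x =>
    (1 - barNormSq (m+2) x) ^ j * (1 + J⁻¹ * barNormSq (m+2) x) ^ (2 * β) with hfdef
  have hf_cont : Continuous f := by
    apply Continuous.mul
    · exact (continuous_const.sub hbar_cont).pow j
    · apply Continuous.rpow_const (continuous_const.add (continuous_const.mul hbar_cont))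
      intro x
      left
      have := barNormSq_nonneg (m+2) x
      show 1 + J⁻¹ * barNormSq (m+2) x ≠ 0
      exact ne_of_gt (by linarith [mul_nonneg (inv_pos.2 hJ0).le this])
  -- pointwise bounds on the sphere
  have hpt : ∀ x ∈ sph, 0 ≤ f x ∧ f x ≤ (1 - barNormSq (m+2) x) ^ j * (2:ℝ)^(2*β) ∧
      1 ≤ (1 + J⁻¹ * barNormSq (m+2) x) ^ (2 * β) ∧ 0 ≤ 1 - barNormSq (m+2) x ∧
      1 - barNormSq (m+2) x ≤ 1 := by
    intro x hx
    have hb0 := barNormSq_nonneg (m+2) x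
    have hb1 := (barNormSq_le_one' m x hx).1
    have hbase1 : (1:ℝ) ≤ 1 + J⁻¹ * barNormSq (m+2) x := by
      have : 0 ≤ J⁻¹ * barNormSq (m+2) x := by positivity
      linarith
    have hbase2 : 1 + J⁻¹ * barNormSq (m+2) x ≤ 2 := by
      have hJinv : J⁻¹ ≤ 1 := by
        rw [inv_le_one_iff₀]; right; linarith
      nlinarith
    have hr1 : (1:ℝ) ≤ (1 + J⁻¹ * barNormSq (m+2) x) ^ (2 * β) := by
      apply Real.one_le_rpow hbase1 (by linarith)
    have hr2 : (1 + J⁻¹ * barNormSq (m+2) x) ^ (2 * β) ≤ (2:ℝ)^(2*β) :=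
      Real.rpow_le_rpow (by linarith) hbase2 (by linarith)
    refine ⟨?_, ?_, hr1, by linarith, by linarith⟩
    · apply mul_nonneg
      · exact pow_nonneg (by linarith) j
      · apply Real.rpow_nonneg (by linarith)
    · exact mul_le_mul_of_nonneg_left hr2 (pow_nonneg (by linarith) j)
  have hf_nonneg : ∀ x ∈ sph, 0 ≤ f x := fun x hx => (hpt x hx).1
  have hf_le : ∀ x ∈ sph, f x ≤ (2:ℝ)^(2*β) := by
    intro x hx
    obtain ⟨_, h2, _, h4, h5⟩ := hpt x hx
    have hp1 : (1 - barNormSq (m+2) x) ^ j ≤ 1 := pow_le_one₀ h4 h5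
    have h2b : (0:ℝ) < (2:ℝ)^(2*β) := Real.rpow_pos_of_pos (by norm_num) _
    calc f x ≤ (1 - barNormSq (m+2) x) ^ j * (2:ℝ)^(2*β) := h2
      _ ≤ 1 * (2:ℝ)^(2*β) := by apply mul_le_mul_of_nonneg_right hp1 h2b.le
      _ = (2:ℝ)^(2*β) := one_mul _
  set L : ℝ≥0∞ := ∫⁻ x in sph, ENNReal.ofReal (f x) ∂μ with hLdef
  have hL_top : L ≤ ENNReal.ofReal ((2:ℝ)^(2*β)) * μ sph := by
    rw [hLdef, ← setLIntegral_const sph _]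
    apply setLIntegral_mono' hsphm
    intro x hx
    exact ENNReal.ofReal_le_ofReal (hf_le x hx)
  have hL_ne : L ≠ ∞ := by
    apply ne_top_of_le_ne_top _ hL_top
    exact (ENNReal.mul_lt_top ENNReal.ofReal_lt_top hW).ne
  have hInt : (∫ x in sph, f x ∂μ) = L.toReal := by
    rw [hLdef]
    apply integral_eq_lintegral_of_nonneg_ae
    · exact (ae_restrict_iff' hsphm).2 (ae_of_all _ (fun x hx => hf_nonneg x hx))
    · exact hf_cont.aestronglyMeasurable
  -- the power identity
  have hρpow : ρ^(m+1) = (2:ℝ)⁻¹^(m+1) * J ^ (-(((m:ℝ)+2) - 1) / 2) := by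
    have h1 : Real.sqrt J ^ (m+1) = J ^ (((m:ℝ)+1)/2) := by
      rw [Real.sqrt_eq_rpow, ← Real.rpow_natCast (J ^ ((1:ℝ)/2)) (m+1),
        ← Real.rpow_mul hJ0.le]
      congr 1
      push_cast
      ring
    have h2 : ρ^(m+1) = (2:ℝ)⁻¹^(m+1) * (Real.sqrt J ^ (m+1))⁻¹ := by
      rw [hρdef, show 1/(2*Real.sqrt J) = 2⁻¹ * (Real.sqrt J)⁻¹ by
        field_simp, mul_pow, inv_pow, inv_pow]
    rw [h2, h1, ← Real.rpow_neg hJ0.le]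
    congr 2
    ring
  constructor
  · -- lower bound
    set A : Set (Fm (m+3)) := {x | x ∈ sph ∧ barNormSq (m+2) x < ρ^2} with hAdef
    have hBern : (3:ℝ)/4 ≤ (1 - ρ^2)^j := by
      have h := one_add_mul_le_pow (a := -(1/(4*J))) (by
        have : 1/(4*J) ≤ 1 := by
          rw [div_le_one (by positivity)]; linarith
        linarith) j
      have hcalc : 1 + (j:ℕ) * (-(1/(4*J))) = 1 - 1/4 := by
        have hJne : J ≠ 0 := hJ0.ne'
        field_simp [hJdef]
        ring
      rw [hcalc] at h
      rw [hρsq]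
      calc (3:ℝ)/4 = 1 - 1/4 := by norm_num
        _ ≤ (1 + -(1/(4*J)))^j := h
        _ = (1 - 1/(4*J))^j := by ring_nf
    have hptA : ∀ x ∈ A, (3:ℝ)/4 ≤ f x := by
      rintro x ⟨hx, hbx⟩
      obtain ⟨h1, _, h3, h4, _⟩ := hpt x hx
      have h5 : (1 - ρ^2)^j ≤ (1 - barNormSq (m+2) x)^j := by
        apply pow_le_pow_left₀ (by nlinarith [hρsq]) (by linarith)
      calc (3:ℝ)/4 ≤ (1 - ρ^2)^j := hBern
        _ ≤ (1 - barNormSq (m+2) x)^j := h5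
        _ = (1 - barNormSq (m+2) x)^j * 1 := (mul_one _).symm
        _ ≤ f x := by
            apply mul_le_mul_of_nonneg_left h3 (by positivity)
    have hAsub : A ⊆ sph := fun x hx => hx.1
    have hAmeas : MeasurableSet A := by
      apply hsphm.inter
      exact measurableSet_lt hbar_meas measurable_const
    have hchain : ENNReal.ofReal ((3:ℝ)/4 * (c * ρ^(m+1))) ≤ L := by
      calc ENNReal.ofReal ((3:ℝ)/4 * (c * ρ^(m+1)))
          = ENNReal.ofReal ((3:ℝ)/4) * ENNReal.ofReal (c * ρ^(m+1)) :=
            ENNReal.ofReal_mul (by norm_num)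
        _ ≤ ENNReal.ofReal ((3:ℝ)/4) * μ A := by
            apply mul_le_mul_right
            exact hcb ρ hρ0 hρhalf
        _ = ∫⁻ _x in A, ENNReal.ofReal ((3:ℝ)/4) ∂μ := by rw [setLIntegral_const]
        _ ≤ ∫⁻ x in A, ENNReal.ofReal (f x) ∂μ := by
            apply setLIntegral_mono' hAmeas
            intro x hx
            exact ENNReal.ofReal_le_ofReal (hptA x hx)
        _ ≤ L := by
            rw [hLdef]
            exact lintegral_mono_set hAsub
    rw [hInt]
    have := (ENNReal.ofReal_le_iff_le_toReal hL_ne).1 hchain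
    calc 3/4 * c * (2:ℝ)⁻¹^(m+1) * J ^ (-(((m:ℝ)+2) - 1) / 2)
        = 3/4 * (c * ρ^(m+1)) := by rw [hρpow]; ring
      _ ≤ L.toReal := this
  · -- upper bound
    set shell : ℕ → Set (Fm (m+3)) := fun k =>
      {x | x ∈ sph ∧ ((k:ℝ)*ρ)^2 ≤ barNormSq (m+2) x ∧
        barNormSq (m+2) x < (((k:ℝ)+1)*ρ)^2} with hshelldef
    have hcov : sph ⊆ ⋃ k : ℕ, shell k := by
      intro x hx
      have hb0 := barNormSq_nonneg (m+2) x
      set t : ℝ := Real.sqrt (barNormSq (m+2) x) with htdef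
      have ht0 : 0 ≤ t := Real.sqrt_nonneg _
      have ht2 : t^2 = barNormSq (m+2) x := Real.sq_sqrt hb0
      set k : ℕ := Nat.floor (t/ρ) with hkdef
      have hk1 : (k:ℝ) ≤ t/ρ := Nat.floor_le (by positivity)
      have hk2 : t/ρ < (k:ℝ)+1 := Nat.lt_floor_add_one _
      have hl : (k:ℝ)*ρ ≤ t := by
        calc (k:ℝ)*ρ ≤ t/ρ * ρ := mul_le_mul_of_nonneg_right hk1 hρ0.le
          _ = t := by field_simp
      have hu : t < ((k:ℝ)+1)*ρ := by
        calc t = t/ρ * ρ := by field_simp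
          _ < ((k:ℝ)+1)*ρ := mul_lt_mul_of_pos_right hk2 hρ0
      refine Set.mem_iUnion.2 ⟨k, hx, ?_, ?_⟩
      · rw [← ht2]
        apply pow_le_pow_left₀ (by positivity) hl
      · rw [← ht2]
        apply pow_lt_pow_left₀ hu ht0
        norm_num
    have hshell_meas : ∀ k, MeasurableSet (shell k) := by
      intro k
      apply hsphm.inter
      exact ((measurableSet_le measurable_const hbar_meas).inter
        (measurableSet_lt hbar_meas measurable_const))
    have hfshell : ∀ k : ℕ, ∀ x ∈ shell k,
        f x ≤ (2:ℝ)^(2*β) * Real.exp (-((k:ℝ)^2/4)) := by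
      rintro k x ⟨hx, hlow, _⟩
      obtain ⟨h1, h2, _, h4, h5⟩ := hpt x hx
      have hb1 := (barNormSq_le_one' m x hx).1
      have hk4 : ((k:ℝ)*ρ)^2 = (k:ℝ)^2/(4*J) := by
        rw [mul_pow, hρsq]; ring
      have hu0 : 0 ≤ 1 - (k:ℝ)^2/(4*J) := by
        rw [← hk4]
        linarith
      have hp1 : (1 - barNormSq (m+2) x)^j ≤ (1 - (k:ℝ)^2/(4*J))^j := by
        apply pow_le_pow_left₀ h4
        rw [← hk4]
        linarith
      have hp2 : (1 - (k:ℝ)^2/(4*J))^j ≤ Real.exp (-((k:ℝ)^2/4)) := by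
        have he1 : 1 - (k:ℝ)^2/(4*J) ≤ Real.exp (-((k:ℝ)^2/(4*J))) := by
          have := Real.add_one_le_exp (-((k:ℝ)^2/(4*J)))
          linarith
        calc (1 - (k:ℝ)^2/(4*J))^j ≤ (Real.exp (-((k:ℝ)^2/(4*J))))^j :=
              pow_le_pow_left₀ hu0 he1 j
          _ = Real.exp ((j:ℕ) * (-((k:ℝ)^2/(4*J)))) := by rw [← Real.exp_nat_mul]
          _ = Real.exp (-((k:ℝ)^2/4)) := by
              congr 1
              have hJne : J ≠ 0 := hJ0.ne'
              field_simp [hJdef]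
              ring
      calc f x ≤ (1 - barNormSq (m+2) x) ^ j * (2:ℝ)^(2*β) := h2
        _ ≤ Real.exp (-((k:ℝ)^2/4)) * (2:ℝ)^(2*β) := by
            apply mul_le_mul_of_nonneg_right (le_trans hp1 hp2)
              (Real.rpow_pos_of_pos (by norm_num) _).le
        _ = (2:ℝ)^(2*β) * Real.exp (-((k:ℝ)^2/4)) := mul_comm _ _
    have hμshell : ∀ k : ℕ, μ (shell k) ≤ ENNReal.ofReal (C * (((k:ℝ)+1)*ρ)^(m+1)) := by
      intro k
      have hsub : shell k ⊆ {x | x ∈ sph ∧ barNormSq (m+2) x < (((k:ℝ)+1)*ρ)^2} :=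
        fun x hx => ⟨hx.1, hx.2.2⟩
      calc μ (shell k) ≤ μ {x | x ∈ sph ∧ barNormSq (m+2) x < (((k:ℝ)+1)*ρ)^2} :=
            measure_mono hsub
        _ ≤ ENNReal.ofReal (C * (((k:ℝ)+1)*ρ)^(m+1)) := hCb _ (by positivity)
    have hkk : ∀ k : ℕ, Real.exp (-((k:ℝ)^2/4)) ≤ r^k := by
      intro k
      have h1 : r^k = Real.exp ((k:ℕ) * (-(1/4))) := by
        rw [Real.exp_nat_mul]
      rw [h1]
      apply Real.exp_le_exp.2
      have hkk2 : (k:ℝ) ≤ (k:ℝ)^2 := by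
        rcases Nat.eq_zero_or_pos k with rfl | hk
        · norm_num
        · have : (1:ℝ) ≤ (k:ℝ) := by exact_mod_cast hk
          nlinarith
      push_cast
      linarith
    have hchain : L ≤ ENNReal.ofReal ((2:ℝ)^(2*β) * C * SB * ρ^(m+1)) := by
      have h2b : (0:ℝ) < (2:ℝ)^(2*β) := Real.rpow_pos_of_pos (by norm_num) _
      calc L ≤ ∫⁻ x in ⋃ k : ℕ, shell k, ENNReal.ofReal (f x) ∂μ := by
            rw [hLdef]
            exact lintegral_mono_set hcov
        _ ≤ ∑' k : ℕ, ∫⁻ x in shell k, ENNReal.ofReal (f x) ∂μ :=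
            lintegral_iUnion_le _ _
        _ ≤ ∑' k : ℕ, ENNReal.ofReal ((2:ℝ)^(2*β) * C * ρ^(m+1) *
              (((k:ℝ)+1)^(m+1) * Real.exp (-((k:ℝ)^2/4)))) := by
            apply ENNReal.tsum_le_tsum
            intro k
            calc (∫⁻ x in shell k, ENNReal.ofReal (f x) ∂μ)
                ≤ ∫⁻ _x in shell k,
                    ENNReal.ofReal ((2:ℝ)^(2*β) * Real.exp (-((k:ℝ)^2/4))) ∂μ := by
                  apply setLIntegral_mono' (hshell_meas k)
                  intro x hx
                  exact ENNReal.ofReal_le_ofReal (hfshell k x hx)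
              _ = ENNReal.ofReal ((2:ℝ)^(2*β) * Real.exp (-((k:ℝ)^2/4))) * μ (shell k) := by
                  rw [setLIntegral_const]
              _ ≤ ENNReal.ofReal ((2:ℝ)^(2*β) * Real.exp (-((k:ℝ)^2/4))) *
                    ENNReal.ofReal (C * (((k:ℝ)+1)*ρ)^(m+1)) :=
                  mul_le_mul_right (hμshell k) _
              _ = ENNReal.ofReal ((2:ℝ)^(2*β) * C * ρ^(m+1) *
                    (((k:ℝ)+1)^(m+1) * Real.exp (-((k:ℝ)^2/4)))) := by
                  rw [← ENNReal.ofReal_mul (by positivity)]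
                  congr 1
                  rw [mul_pow]
                  ring
        _ ≤ ∑' k : ℕ, ENNReal.ofReal ((2:ℝ)^(2*β) * C * ρ^(m+1) *
              (((k:ℝ)+1)^(m+1) * r^k)) := by
            apply ENNReal.tsum_le_tsum
            intro k
            apply ENNReal.ofReal_le_ofReal
            apply mul_le_mul_of_nonneg_left _ (by positivity)
            apply mul_le_mul_of_nonneg_left (hkk k) (by positivity)
        _ = ENNReal.ofReal ((2:ℝ)^(2*β) * C * ρ^(m+1)) *
              ∑' k : ℕ, ENNReal.ofReal (((k:ℝ)+1)^(m+1) * r^k) := by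
            rw [← ENNReal.tsum_mul_left]
            apply tsum_congr
            intro k
            rw [← ENNReal.ofReal_mul (by positivity)]
        _ = ENNReal.ofReal ((2:ℝ)^(2*β) * C * ρ^(m+1)) * ENNReal.ofReal SB := by
            rw [← ENNReal.ofReal_tsum_of_nonneg hbnn hsumb]
        _ = ENNReal.ofReal ((2:ℝ)^(2*β) * C * SB * ρ^(m+1)) := by
            rw [← ENNReal.ofReal_mul (by positivity)]
            congr 1
            ring
    rw [hInt]
    have h2b : (0:ℝ) < (2:ℝ)^(2*β) := Real.rpow_pos_of_pos (by norm_num) _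
    calc L.toReal ≤ (2:ℝ)^(2*β) * C * SB * ρ^(m+1) :=
          ENNReal.toReal_le_of_le_ofReal (by positivity) hchain
      _ = (2:ℝ)^(2*β) * C * SB * (2:ℝ)⁻¹^(m+1) * J ^ (-(((m:ℝ)+2) - 1) / 2) := by
          rw [hρpow]; ring


end

/-- Weighted `L²` normalisation of the highest weight harmonic (base case of the
inductive construction): with `h = j⁻¹`,
`∫_{Sⁿ} (1-|x̄|²)^j (1 + j⁻¹|x̄|²)^{2β} dμ ≍ j^{-(n-1)/2}` uniformly in `j ≥ 1`,
where `μ` is the `n`-dimensional Hausdorff (surface) measure on `Sⁿ`. -/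
theorem highestWeight_weighted_l2_normalisation (n : ℕ) (hn : 2 ≤ n)
    (β : ℝ) (hβ : 0 ≤ β) :
    ∃ c₁ c₂ : ℝ, 0 < c₁ ∧ 0 < c₂ ∧
      ∀ j : ℕ, 1 ≤ j →
        c₁ * (j : ℝ) ^ (-((n : ℝ) - 1) / 2) ≤
            (∫ x in Metric.sphere (0 : EuclideanSpace ℝ (Fin (n + 1))) 1,
              (1 - barNormSq n x) ^ j *
                (1 + (j : ℝ)⁻¹ * barNormSq n x) ^ (2 * β) ∂(μH[(n : ℝ)])) ∧
          (∫ x in Metric.sphere (0 : EuclideanSpace ℝ (Fin (n + 1))) 1,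
              (1 - barNormSq n x) ^ j *
                (1 + (j : ℝ)⁻¹ * barNormSq n x) ^ (2 * β) ∂(μH[(n : ℝ)])) ≤
            c₂ * (j : ℝ) ^ (-((n : ℝ) - 1) / 2) := by
  obtain ⟨m, rfl⟩ : ∃ m, n = m + 2 := ⟨n - 2, by omega⟩
  have hcast : ((m + 2 : ℕ) : ℝ) = (m : ℝ) + 2 := by push_cast; ring
  simp only [hcast]
  exact main_aux m β hβ
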